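/- Let n ≥ 1, let (e₁, …, e_n) be the standard orthonormal basis of Euclidean space ℝⁿ, and let Φ(B_n) = {ε·e_i : ε ∈ {1,−1}, 1 ≤ i ≤ n} ∪ {ε·e_i + ε'·e_j : ε, ε' ∈ {1,−1}, 1 ≤ i < j ≤ n}. Suppose ω ∈ ℝⁿ satisfies ⟨ω, α⟩ ≠ 0 for every α ∈ Φ(B_n), and let s₀ > 0 and t₀ > 0. Then the set {α ∈ Φ(B_n) : ‖α‖² = 2 and ⟨ω, α⟩ = s₀} ∪ {β ∈ Φ(B_n) : ‖β‖² = 1 and ⟨ω, β⟩ = t₀} is linearly independent in ℝⁿ. -/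

import Mathlib

open scoped RealInnerProductSpace

/-- The short roots `±e_i` of the root system of type `B_n` in `ℝⁿ`. -/
def shortRootsB (n : ℕ) : Set (EuclideanSpace ℝ (Fin n)) :=
  {v | ∃ (ε : ℝ) (i : Fin n), (ε = 1 ∨ ε = -1) ∧ v = ε • EuclideanSpace.single i (1 : ℝ)}

/-- The long roots `±e_i ± e_j` (`i < j`) of the root system of type `B_n` in `ℝⁿ`. -/
def longRootsB (n : ℕ) : Set (EuclideanSpace ℝ (Fin n)) :=
  {v | ∃ (ε δ : ℝ) (i j : Fin n), (ε = 1 ∨ ε = -1) ∧ (δ = 1 ∨ δ = -1) ∧ i < j ∧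
    v = ε • EuclideanSpace.single i (1 : ℝ) + δ • EuclideanSpace.single j (1 : ℝ)}

/-- The root system of type `B_n` in `ℝⁿ`. -/
def PhiB (n : ℕ) : Set (EuclideanSpace ℝ (Fin n)) := shortRootsB n ∪ longRootsB n

namespace Stmt12Aux

variable {n : ℕ}

/-- A "long-type" vector at level `s` for the weight `w`. -/
def IsLng (w : Fin n → ℝ) (s : ℝ) (v : EuclideanSpace ℝ (Fin n)) : Prop :=
  ∃ (a b : ℝ) (i j : Fin n), (a = 1 ∨ a = -1) ∧ (b = 1 ∨ b = -1) ∧ i ≠ j ∧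
    v = a • EuclideanSpace.single i (1 : ℝ) + b • EuclideanSpace.single j (1 : ℝ) ∧
    a * w i + b * w j = s

lemma coord_sum (l : EuclideanSpace ℝ (Fin n) →₀ ℝ) (u : Fin n) :
    (l.sum fun v c => c • v) u = ∑ v ∈ l.support, l v * v u := by
  rw [Finsupp.sum]
  have h := map_sum (EuclideanSpace.projₗ (𝕜 := ℝ) u) (fun v => l v • v) l.support
  rw [show (EuclideanSpace.projₗ (𝕜 := ℝ) u) (∑ v ∈ l.support, l v • v)
      = (∑ v ∈ l.support, l v • v) u from rfl] at h
  rw [h]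
  exact Finset.sum_congr rfl fun v _ => rfl

lemma long_apply (a b : ℝ) (i j u : Fin n) :
    (a • EuclideanSpace.single i (1 : ℝ) + b • EuclideanSpace.single j (1 : ℝ)
      : EuclideanSpace ℝ (Fin n)) u
      = (if u = i then a else 0) + (if u = j then b else 0) := by
  simp [PiLp.add_apply, PiLp.smul_apply, EuclideanSpace.single_apply]

lemma smul_single_apply (ε : ℝ) (i u : Fin n) :
    (ε • EuclideanSpace.single i (1 : ℝ) : EuclideanSpace ℝ (Fin n)) u
      = if u = i then ε else 0 := by
  simp [PiLp.smul_apply, EuclideanSpace.single_apply]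

lemma sum_erase_split (l : EuclideanSpace ℝ (Fin n) →₀ ℝ) (v₀ : EuclideanSpace ℝ (Fin n))
    (h : v₀ ∈ l.support) :
    (l.sum fun v c => c • v) = l v₀ • v₀ + ((l.erase v₀).sum fun v c => c • v) := by
  classical
  rw [Finsupp.sum, Finsupp.sum, Finsupp.support_erase,
    ← Finset.add_sum_erase _ (fun v => l v • v) h]
  congr 1
  exact Finset.sum_congr rfl fun v hv => by
    rw [Finsupp.erase_ne (Finset.ne_of_mem_erase hv)]

/-- Given a long-type vector touching coordinate `u`, normalize its presentation. -/
lemma lng_touch {w : Fin n → ℝ} {s : ℝ} {v : EuclideanSpace ℝ (Fin n)}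
    (hv : IsLng w s v) (u : Fin n) (hu : v u ≠ 0) :
    ∃ (b : ℝ) (x : Fin n), x ≠ u ∧ (v u = 1 ∨ v u = -1) ∧ (b = 1 ∨ b = -1) ∧
      v = (v u) • EuclideanSpace.single u (1 : ℝ) + b • EuclideanSpace.single x (1 : ℝ) ∧
      (v u) * w u + b * w x = s ∧ v x = b := by
  obtain ⟨a, b, i, j, ha, hb, hij, hveq, hlev⟩ := hv
  have happ : ∀ t, v t = (if t = i then a else 0) + (if t = j then b else 0) := by
    intro t; rw [hveq]; exact long_apply a b i j t
  by_cases hui : u = i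
  · subst hui
    have hvu : v u = a := by rw [happ u]; simp [hij]
    refine ⟨b, j, fun h => hij h.symm, hvu ▸ ha, hb, ?_, ?_, ?_⟩
    · rw [hvu]; exact hveq
    · rw [hvu]; exact hlev
    · rw [happ j]; simp [Ne.symm hij]
  · by_cases huj : u = j
    · subst huj
      have hvu : v u = b := by rw [happ u]; simp [hui]
      refine ⟨a, i, fun h => hui h.symm, hvu ▸ hb, ha, ?_, ?_, ?_⟩
      · rw [hvu, hveq, add_comm]
      · rw [hvu]; linarith
      · rw [happ i]; simp [hij]
    · exfalso; apply hu; rw [happ u]; simp [hui, huj]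

/-- Key inductive lemma: a linear combination of long-type vectors at level `s > 0`
can only be a multiple of a coordinate vector trivially. -/
lemma key (w : Fin n → ℝ) (s : ℝ) (hs : 0 < s)
    (hw0 : ∀ i, w i ≠ 0)
    (hwne : ∀ i j : Fin n, i ≠ j → w i ≠ w j)
    (hwns : ∀ i j : Fin n, i ≠ j → w i + w j ≠ 0) :
    ∀ (k : ℕ) (l : EuclideanSpace ℝ (Fin n) →₀ ℝ), l.support.card = k →
      (∀ v ∈ l.support, IsLng w s v) →
      ∀ (r : ℝ) (i : Fin n),
        (l.sum fun v c => c • v) = r • EuclideanSpace.single i (1 : ℝ) →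
        r = 0 ∧ l = 0 := by
  classical
  intro k
  induction k with
  | zero =>
    intro l hcard _ r i hsum
    have hl0 : l = 0 := by
      rwa [Finset.card_eq_zero, Finsupp.support_eq_empty] at hcard
    subst hl0
    rw [Finsupp.sum_zero_index] at hsum
    have := congrArg (fun z : EuclideanSpace ℝ (Fin n) => z i) hsum.symm
    simp only [smul_single_apply, if_pos rfl] at this
    exact ⟨by simpa using this, rfl⟩
  | succ k ih =>
    intro l hcard hlng r i hsum
    exfalso
    have hne : l.support.Nonempty := by
      rw [← Finset.card_pos, hcard]; omega
    -- the set of touched coordinates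
    set S : Finset (Fin n) := Finset.univ.filter (fun u => ∃ v ∈ l.support, v u ≠ 0) with hS
    have hSne : S.Nonempty := by
      obtain ⟨v, hv⟩ := hne
      obtain ⟨a, b, i', j', ha, hb, hij, hveq, _⟩ := hlng v hv
      refine ⟨i', Finset.mem_filter.2 ⟨Finset.mem_univ _, v, hv, ?_⟩⟩
      rw [hveq, long_apply]
      rcases ha with rfl | rfl <;> simp [hij]
    obtain ⟨u, huS, hmax⟩ := S.exists_max_image (fun u => |w u|) hSne
    obtain ⟨v₀, hv₀supp, hv₀u⟩ := (Finset.mem_filter.1 huS).2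
    obtain ⟨b, x, hxu, hp, hb, hveq, hlev, hvx⟩ := lng_touch (hlng v₀ hv₀supp) u hv₀u
    obtain ⟨p, hpdef⟩ : ∃ p : ℝ, p = v₀ u := ⟨v₀ u, rfl⟩
    rw [← hpdef] at hp hveq hlev
    -- uniqueness of the vector touching u
    have huniq : ∀ v' ∈ l.support, v' u ≠ 0 → v' = v₀ := by
      intro v' h1 h2
      by_contra hne'
      obtain ⟨b', x', hxu', hp', hb', hveq', hlev', hvx'⟩ := lng_touch (hlng v' h1) u h2
      have habs : |p| = 1 := by rcases hp with h | h <;> simp [h]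
      have hmem : ∀ y : Fin n, (∃ v ∈ l.support, v y ≠ 0) → |w y| ≤ |w u| := by
        intro y hy
        exact hmax y (Finset.mem_filter.2 ⟨Finset.mem_univ _, hy⟩)
      have hpp : v' u = p ∨ v' u = -p := by
        rcases hp with h | h <;> rcases hp' with h' | h' <;> rw [h, h'] <;> norm_num
      rcases hpp with hpp | hpp
      · -- same coefficient at u : contradiction with regularity
        have hbb : b * w x = b' * w x' := by
          rw [hpp] at hlev'; linarith
        by_cases hxx : x = x'
        · subst hxx
          have hbb' : b = b' := by
            rcases hb with rfl | rfl <;> rcases hb' with rfl | rfl <;>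
              first
                | rfl
                | (exfalso; apply hw0 x; linarith)
          apply hne'
          rw [hveq', hveq, hpp, hbb']
        · rcases hb with rfl | rfl <;> rcases hb' with rfl | rfl
          · exact hwne x x' hxx (by linarith)
          · exact hwns x x' hxx (by linarith)
          · exact hwns x x' hxx (by linarith)
          · exact hwne x x' hxx (by linarith)
      · -- opposite coefficients at u : a strictly larger coordinate exists
        have h1' : b * w x = s - p * w u := by linarith
        have h2' : b' * w x' = s + p * w u := by rw [hpp] at hlev'; linarith
        have habsu : |w u| = |p * w u| := by
          rw [abs_mul, habs, one_mul]
        rcases le_or_gt 0 (p * w u) with hq | hq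
        · have hx'big : |w x'| > |w u| := by
            have : |w x'| = |b' * w x'| := by
              rcases hb' with rfl | rfl <;> simp
            rw [this, h2', habsu, abs_of_nonneg hq, abs_of_pos (by linarith)]
            linarith
          have : |w x'| ≤ |w u| := hmem x' ⟨v', h1, by
            rw [hvx']; rcases hb' with rfl | rfl <;> norm_num⟩
          linarith
        · have hxbig : |w x| > |w u| := by
            have : |w x| = |b * w x| := by
              rcases hb with rfl | rfl <;> simp
            rw [this, h1', habsu, abs_of_neg hq, abs_of_pos (by linarith)]
            linarith
          have : |w x| ≤ |w u| := hmem x ⟨v₀, hv₀supp, by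
            rw [hvx]; rcases hb with rfl | rfl <;> norm_num⟩
          linarith
    -- evaluate the identity at coordinate u
    have hcoord : ∑ v ∈ l.support, l v * v u = r * (if u = i then 1 else 0) := by
      have := congrArg (fun z : EuclideanSpace ℝ (Fin n) => z u) hsum
      simp only at this
      rw [coord_sum] at this
      rw [this, smul_single_apply]
      by_cases h : u = i <;> simp [h]
    have hsingle : ∑ v ∈ l.support, l v * v u = l v₀ * v₀ u := by
      refine Finset.sum_eq_single_of_mem v₀ hv₀supp fun v' hv' hne' => ?_
      by_cases h : v' u = 0
      · rw [h, mul_zero]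
      · exact absurd (huniq v' hv' h) hne'
    have hlv₀ : l v₀ ≠ 0 := Finsupp.mem_support_iff.1 hv₀supp
    by_cases hui : u = i
    · -- recursion step
      subst hui
      have hr : l v₀ * p = r := by
        rw [hpdef, ← hsingle, hcoord]; simp
      set l' := l.erase v₀ with hl'
      have hcard' : l'.support.card = k := by
        rw [hl', Finsupp.support_erase, Finset.card_erase_of_mem hv₀supp, hcard]
        omega
      have hlng' : ∀ v ∈ l'.support, IsLng w s v := by
        intro v hv
        rw [hl', Finsupp.support_erase] at hv
        exact hlng v (Finset.mem_of_mem_erase hv)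
      have hsum' : (l'.sum fun v c => c • v)
          = (-(l v₀ * b)) • EuclideanSpace.single x (1 : ℝ) := by
        have hsplit := sum_erase_split l v₀ hv₀supp
        rw [hsum] at hsplit
        have h2 : (l'.sum fun v c => c • v)
            = r • EuclideanSpace.single u (1 : ℝ) - l v₀ • v₀ := by
          rw [hl']; rw [eq_sub_iff_add_eq, add_comm]; exact hsplit.symm
        rw [h2, ← hr, hveq]
        module
      obtain ⟨hr0, _⟩ := ih l' hcard' hlng' _ _ hsum'
      have : l v₀ = 0 := by
        rcases hb with rfl | rfl <;> linarith [hr0]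
      exact hlv₀ this
    · -- u is not i : the coefficient of v₀ must vanish
      rw [hsingle, if_neg hui, mul_zero, ← hpdef] at hcoord
      rcases hp with h | h <;> rw [h] at hcoord <;>
        [exact hlv₀ (by linarith); exact hlv₀ (by linarith)]

lemma inner_smul_single (ω : EuclideanSpace ℝ (Fin n)) (ε : ℝ) (i : Fin n) :
    ⟪ω, ε • EuclideanSpace.single i (1 : ℝ)⟫ = ε * ω i := by
  rw [inner_smul_right, EuclideanSpace.inner_single_right]
  simp

lemma inner_long (ω : EuclideanSpace ℝ (Fin n)) (a b : ℝ) (i j : Fin n) :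
    ⟪ω, a • EuclideanSpace.single i (1 : ℝ) + b • EuclideanSpace.single j (1 : ℝ)⟫
      = a * ω i + b * ω j := by
  rw [inner_add_right, inner_smul_single, inner_smul_single]

lemma norm_sq_short (ε : ℝ) (i : Fin n) (hε : ε = 1 ∨ ε = -1) :
    ‖(ε • EuclideanSpace.single i (1 : ℝ) : EuclideanSpace ℝ (Fin n))‖ ^ 2 = 1 := by
  rw [norm_smul]
  rcases hε with rfl | rfl <;> norm_num

lemma norm_sq_long (a b : ℝ) (i j : Fin n) (hij : i ≠ j)
    (ha : a = 1 ∨ a = -1) (hb : b = 1 ∨ b = -1) :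
    ‖(a • EuclideanSpace.single i (1 : ℝ) + b • EuclideanSpace.single j (1 : ℝ)
      : EuclideanSpace ℝ (Fin n))‖ ^ 2 = 2 := by
  rw [← real_inner_self_eq_norm_sq]
  simp only [inner_add_add_self, real_inner_smul_left, real_inner_smul_right,
    EuclideanSpace.inner_single_left, EuclideanSpace.single_apply, hij, Ne.symm hij, if_true, if_false]
  rcases ha with rfl | rfl <;> rcases hb with rfl | rfl <;> norm_num

end Stmt12Aux

open Stmt12Aux in
/-- Type `B_n` case of linear independence: for `ω` regular and `s₀, t₀ > 0`, the long roots
pairing to `s₀` together with the short roots pairing to `t₀` form a linearly independent set. -/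
theorem statement12 (n : ℕ) (hn : 1 ≤ n) (ω : EuclideanSpace ℝ (Fin n))
    (hω : ∀ α ∈ PhiB n, ⟪ω, α⟫ ≠ 0) (s₀ t₀ : ℝ) (hs₀ : 0 < s₀) (ht₀ : 0 < t₀) :
    LinearIndependent ℝ
      (fun x : ({α ∈ PhiB n | ‖α‖ ^ 2 = 2 ∧ ⟪ω, α⟫ = s₀} ∪
                {β ∈ PhiB n | ‖β‖ ^ 2 = 1 ∧ ⟪ω, β⟫ = t₀} :
                Set (EuclideanSpace ℝ (Fin n))) => (x : EuclideanSpace ℝ (Fin n))) := by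
  classical
  have hshortPhi : ∀ (ε : ℝ) (i : Fin n), (ε = 1 ∨ ε = -1) →
      (ε • EuclideanSpace.single i (1 : ℝ)) ∈ PhiB n :=
    fun ε i hε => Or.inl ⟨ε, i, hε, rfl⟩
  have hlongPhi : ∀ (a b : ℝ) (i j : Fin n), (a = 1 ∨ a = -1) → (b = 1 ∨ b = -1) → i ≠ j →
      (a • EuclideanSpace.single i (1 : ℝ) + b • EuclideanSpace.single j (1 : ℝ)) ∈ PhiB n := by
    intro a b i j ha hb hij
    rcases lt_or_gt_of_ne hij with h | h
    · exact Or.inr ⟨a, b, i, j, ha, hb, h, rfl⟩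
    · exact Or.inr ⟨b, a, j, i, hb, ha, h, by rw [add_comm]⟩
  have hw0 : ∀ i : Fin n, ω i ≠ 0 := by
    intro i h
    apply hω _ (hshortPhi 1 i (Or.inl rfl))
    rw [inner_smul_single, h]; ring
  have hwne : ∀ i j : Fin n, i ≠ j → ω i ≠ ω j := by
    intro i j hij h
    apply hω _ (hlongPhi 1 (-1) i j (Or.inl rfl) (Or.inr rfl) hij)
    rw [inner_long, h]; ring
  have hwns : ∀ i j : Fin n, i ≠ j → ω i + ω j ≠ 0 := by
    intro i j hij h
    apply hω _ (hlongPhi 1 1 i j (Or.inl rfl) (Or.inl rfl) hij)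
    rw [inner_long]; linarith
  -- membership descriptions
  have hA : ∀ v ∈ {α ∈ PhiB n | ‖α‖ ^ 2 = 2 ∧ ⟪ω, α⟫ = s₀},
      IsLng (fun i => ω i) s₀ v := by
    rintro v ⟨hvPhi, hn2, hlev⟩
    rcases hvPhi with ⟨ε, i, hε, rfl⟩ | ⟨a, b, i, j, ha, hb, hij, rfl⟩
    · rw [norm_sq_short ε i hε] at hn2; norm_num at hn2
    · refine ⟨a, b, i, j, ha, hb, ne_of_lt hij, rfl, ?_⟩
      rw [← inner_long ω a b i j]; exact hlev
  have hB : ∀ v ∈ {β ∈ PhiB n | ‖β‖ ^ 2 = 1 ∧ ⟪ω, β⟫ = t₀},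
      ∃ (ε : ℝ) (i : Fin n), (ε = 1 ∨ ε = -1) ∧
        v = ε • EuclideanSpace.single i (1 : ℝ) ∧ ε * ω i = t₀ := by
    rintro v ⟨hvPhi, hn1, hlev⟩
    rcases hvPhi with ⟨ε, i, hε, rfl⟩ | ⟨a, b, i, j, ha, hb, hij, rfl⟩
    · exact ⟨ε, i, hε, rfl, by rw [← inner_smul_single ω ε i]; exact hlev⟩
    · rw [norm_sq_long a b i j (ne_of_lt hij) ha hb] at hn1; norm_num at hn1
  -- uniqueness of the short root at level t₀
  have huniqB : ∀ (ε : ℝ) (i : Fin n) (ε' : ℝ) (j : Fin n),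
      (ε = 1 ∨ ε = -1) → (ε' = 1 ∨ ε' = -1) → ε * ω i = t₀ → ε' * ω j = t₀ →
      (ε • EuclideanSpace.single i (1 : ℝ) : EuclideanSpace ℝ (Fin n))
        = ε' • EuclideanSpace.single j (1 : ℝ) := by
    intro ε i ε' j hε hε' h1 h2
    by_cases hij : i = j
    · subst hij
      have : ε = ε' := by
        have := hw0 i
        rcases hε with rfl | rfl <;> rcases hε' with rfl | rfl <;>
          first | rfl | (exfalso; apply hw0 i; linarith)
      rw [this]
    · exfalso
      rcases hε with rfl | rfl <;> rcases hε' with rfl | rfl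
      · exact hwne i j hij (by linarith)
      · exact hwns i j hij (by linarith)
      · exact hwns i j hij (by linarith)
      · exact hwne i j hij (by linarith)
  rw [linearIndependent_subtype_iff, linearIndepOn_iff]
  intro l hl hl0
  rw [Finsupp.mem_supported] at hl
  rw [Finsupp.linearCombination_apply] at hl0
  simp only [id_eq] at hl0
  have hsupp : ∀ v ∈ l.support, v ∈ {α ∈ PhiB n | ‖α‖ ^ 2 = 2 ∧ ⟪ω, α⟫ = s₀} ∪
      {β ∈ PhiB n | ‖β‖ ^ 2 = 1 ∧ ⟪ω, β⟫ = t₀} := fun v hv => hl hv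
  by_cases hex : ∃ β ∈ l.support, ¬ IsLng (fun i => ω i) s₀ β
  · exfalso
    obtain ⟨β, hβs, hβn⟩ := hex
    have hβB : ∃ (ε : ℝ) (i : Fin n), (ε = 1 ∨ ε = -1) ∧
        β = ε • EuclideanSpace.single i (1 : ℝ) ∧ ε * ω i = t₀ := by
      rcases hsupp β hβs with h | h
      · exact absurd (hA β h) hβn
      · exact hB β h
    obtain ⟨ε, i₀, hε, hβeq, hβlev⟩ := hβB
    set l' := l.erase β with hl'
    have hlng' : ∀ v ∈ l'.support, IsLng (fun i => ω i) s₀ v := by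
      intro v hv
      rw [hl', Finsupp.support_erase] at hv
      have hvs := Finset.mem_of_mem_erase hv
      have hvne := Finset.ne_of_mem_erase hv
      rcases hsupp v hvs with h | h
      · exact hA v h
      · obtain ⟨ε', j, hε', hveq, hvlev⟩ := hB v h
        exfalso
        apply hvne
        rw [hveq, hβeq]
        exact huniqB ε' j ε i₀ hε' hε hvlev hβlev
    have hsum' : (l'.sum fun v c => c • v)
        = (-(l β * ε)) • EuclideanSpace.single i₀ (1 : ℝ) := by
      have hsplit := sum_erase_split l β hβs
      rw [hl0] at hsplit
      have h2 : (l'.sum fun v c => c • v) = - (l β • β) := by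
        rw [hl', eq_comm, neg_eq_iff_add_eq_zero]; exact hsplit.symm
      rw [h2, hβeq]
      module
    obtain ⟨hr0, _⟩ := key (fun i => ω i) s₀ hs₀ hw0 hwne hwns l'.support.card l' rfl
      hlng' _ _ hsum'
    have hlβ : l β = 0 := by
      rcases hε with rfl | rfl <;> linarith [hr0]
    exact Finsupp.mem_support_iff.1 hβs hlβ
  · push_neg at hex
    have i0 : Fin n := ⟨0, hn⟩
    have hsum0 : (l.sum fun v c => c • v)
        = (0 : ℝ) • EuclideanSpace.single i0 (1 : ℝ) := by
      rw [hl0, zero_smul]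
    exact (key (fun i => ω i) s₀ hs₀ hw0 hwne hwns l.support.card l rfl hex 0 i0 hsum0).2
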